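/- With notation as in Theorem 1 (H n-dimensional, g = ∑_{i=1}^s ξ_i √2 φ_{2i-1}∧φ_{2i} a unit vector in Λ²H, T = 3A³(P_g ⊗ I)A³ on Λ³H): for each l with 2s < l ≤ n, the vector g ∧ φ_l is an eigenvector of T with eigenvalue 1, i.e., T(g∧φ_l) = g∧φ_l. -/

import Mathlib

noncomputable section
open scoped BigOperators ComplexConjugate InnerProductSpace

/-- The 1-particle space. -/
abbrev HS (n : ℕ) := EuclideanSpace ℂ (Fin n)
/-- Model for H^{⊗2}; Λ²H sits inside as the antisymmetric tensors. -/
abbrev Sq (n : ℕ) := EuclideanSpace ℂ (Fin 2 → Fin n)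
/-- Model for H^{⊗3}; Λ³H sits inside as the antisymmetric tensors. -/
abbrev Cube (n : ℕ) := EuclideanSpace ℂ (Fin 3 → Fin n)

/-- 2-particle wedge with convention ⟨u₁∧u₂, v₁∧v₂⟩ = (1/2!)det(⟨uᵢ,vⱼ⟩). -/
def wedge2 (n : ℕ) (u v : HS n) : Sq n :=
  WithLp.toLp 2 (fun x => (2 : ℂ)⁻¹ * (u (x 0) * v (x 1) - u (x 1) * v (x 0)))

/-- The 3-particle antisymmetrizer A³ on H^{⊗3}. -/
def alt3 (n : ℕ) : Cube n →ₗ[ℂ] Cube n where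
  toFun T := WithLp.toLp 2 (fun x => (6 : ℂ)⁻¹ *
    ∑ σ : Equiv.Perm (Fin 3), ((Equiv.Perm.sign σ : ℤ) : ℂ) * T (x ∘ σ))
  map_add' T S := by
    ext x
    simp [PiLp.add_apply, mul_add, Finset.sum_add_distrib]
  map_smul' c T := by
    ext x
    simp [PiLp.smul_apply, Finset.mul_sum, smul_eq_mul]
    all_goals (apply Finset.sum_congr rfl; intro σ _; ring)

/-- 3-particle wedge with convention ⟨u₁∧u₂∧u₃, v₁∧v₂∧v₃⟩ = (1/3!)det(⟨uᵢ,vⱼ⟩). -/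
def wedge3 (n : ℕ) (u v w : HS n) : Cube n :=
  WithLp.toLp 2 (fun x => (6 : ℂ)⁻¹ * ∑ σ : Equiv.Perm (Fin 3),
    ((Equiv.Perm.sign σ : ℤ) : ℂ) * (u (x (σ 0)) * v (x (σ 1)) * w (x (σ 2))))

/-- Wedge of a 2-particle function with a 1-particle function: g ∧ φ = A³(g ⊗ φ). -/
def wedgeSV (n : ℕ) (g : Sq n) (v : HS n) : Cube n :=
  alt3 n (WithLp.toLp 2 (fun x => g ![x 0, x 1] * v (x 2)))

/-- P²_g ⊗ I¹ acting on H^{⊗3}. -/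
def pgI (n : ℕ) (g : Sq n) : Cube n →ₗ[ℂ] Cube n where
  toFun T := WithLp.toLp 2 (fun x => g ![x 0, x 1] *
    ∑ y : Fin 2 → Fin n, conj (g y) * T ![y 0, y 1, x 2])
  map_add' T S := by
    ext x
    simp [PiLp.add_apply, mul_add, Finset.sum_add_distrib]
  map_smul' c T := by
    ext x
    simp [PiLp.smul_apply, Finset.mul_sum, smul_eq_mul]
    all_goals (apply Finset.sum_congr rfl; intro y _; ring)

/-- The operator 3P²_g ∧ I¹ = 3A³(P²_g ⊗ I¹)A³ (as an operator on H^{⊗3}; it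
vanishes on the orthogonal complement of Λ³H and restricts to Λ³H). -/
def T3 (n : ℕ) (g : Sq n) : Cube n →ₗ[ℂ] Cube n :=
  (3 : ℂ) • (alt3 n ∘ₗ pgI n g ∘ₗ alt3 n)

/-! ### Auxiliary lemmas -/

open Equiv in
lemma permSum3 {M : Type*} [AddCommMonoid M] (f : Equiv.Perm (Fin 3) → M) :
    ∑ σ : Equiv.Perm (Fin 3), f σ =
      f 1 + f (swap 0 1) + f (swap 0 2) + f (swap 1 2) +
      f (swap 0 1 * swap 1 2) + f (swap 0 2 * swap 1 2) := by
  rw [show (Finset.univ : Finset (Perm (Fin 3))) =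
      {1, swap 0 1, swap 0 2, swap 1 2, swap 0 1 * swap 1 2, swap 0 2 * swap 1 2} by decide]
  rw [Finset.sum_insert (by decide), Finset.sum_insert (by decide),
    Finset.sum_insert (by decide), Finset.sum_insert (by decide),
    Finset.sum_insert (by decide), Finset.sum_singleton]
  abel

lemma alt3_apply (n : ℕ) (T : Cube n) (x : Fin 3 → Fin n) :
    alt3 n T x = (6 : ℂ)⁻¹ *
      ∑ σ : Equiv.Perm (Fin 3), ((Equiv.Perm.sign σ : ℤ) : ℂ) * T (x ∘ σ) := rfl

lemma alt3_idem (n : ℕ) (T : Cube n) : alt3 n (alt3 n T) = alt3 n T := by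
  ext x
  rw [alt3_apply]
  have key : ∀ σ : Equiv.Perm (Fin 3),
      ((Equiv.Perm.sign σ : ℤ) : ℂ) * alt3 n T (x ∘ σ)
        = (6:ℂ)⁻¹ * ∑ ρ : Equiv.Perm (Fin 3), ((Equiv.Perm.sign ρ : ℤ) : ℂ) * T (x ∘ ρ) := by
    intro σ
    rw [alt3_apply, ← mul_assoc, mul_comm _ (6:ℂ)⁻¹, mul_assoc, Finset.mul_sum]
    congr 1
    refine Fintype.sum_equiv (Equiv.mulLeft σ) _ _ (fun τ => ?_)
    have h2 : ((Equiv.Perm.sign (σ * τ) : ℤ) : ℂ)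
        = ((Equiv.Perm.sign σ : ℤ) : ℂ) * ((Equiv.Perm.sign τ : ℤ) : ℂ) := by
      rw [map_mul]; push_cast; ring
    simp only [Equiv.coe_mulLeft]
    rw [h2, ← mul_assoc]
    rfl
  calc alt3 n (alt3 n T) x
      = (6:ℂ)⁻¹ * ∑ σ : Equiv.Perm (Fin 3),
          ((6:ℂ)⁻¹ * ∑ ρ : Equiv.Perm (Fin 3), ((Equiv.Perm.sign ρ : ℤ) : ℂ) * T (x ∘ ρ)) := by
        rw [alt3_apply]; congr 1; exact Finset.sum_congr rfl (fun σ _ => key σ)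
    _ = alt3 n T x := by
        have hc : (Finset.univ : Finset (Equiv.Perm (Fin 3))).card = 6 := by decide
        rw [Finset.sum_const, hc, alt3_apply, nsmul_eq_mul]
        push_cast
        ring

lemma pgI_apply (n : ℕ) (g : Sq n) (T : Cube n) (x : Fin 3 → Fin n) :
    pgI n g T x = g ![x 0, x 1] *
      ∑ y : Fin 2 → Fin n, conj (g y) * T ![y 0, y 1, x 2] := rfl

lemma sum_fin2 {M : Type*} [AddCommMonoid M] (n : ℕ) (f : Fin n → Fin n → M) :
    ∑ y : Fin 2 → Fin n, f (y 0) (y 1) = ∑ a, ∑ b, f a b := by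
  calc ∑ y : Fin 2 → Fin n, f (y 0) (y 1)
      = ∑ p : Fin n × Fin n, f p.1 p.2 :=
        Fintype.sum_equiv (finTwoArrowEquiv (Fin n)) _ _ (fun y => rfl)
    _ = ∑ a, ∑ b, f a b := Fintype.sum_prod_type (f := fun p => f p.1 p.2)

lemma swap4 {M : Type*} [AddCommMonoid M] {ι κ : Type*} [Fintype ι] [Fintype κ]
    (F : ι → ι → κ → κ → M) :
    ∑ a, ∑ b, ∑ i, ∑ j, F a b i j = ∑ i, ∑ j, ∑ a, ∑ b, F a b i j := by
  calc ∑ a, ∑ b, ∑ i, ∑ j, F a b i j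
      = ∑ a, ∑ i, ∑ b, ∑ j, F a b i j :=
        Finset.sum_congr rfl (fun a _ => Finset.sum_comm)
    _ = ∑ i, ∑ a, ∑ b, ∑ j, F a b i j := Finset.sum_comm
    _ = ∑ i, ∑ a, ∑ j, ∑ b, F a b i j :=
        Finset.sum_congr rfl (fun i _ => Finset.sum_congr rfl (fun a _ => Finset.sum_comm))
    _ = ∑ i, ∑ j, ∑ a, ∑ b, F a b i j :=
        Finset.sum_congr rfl (fun i _ => Finset.sum_comm)

/-- The coordinate kernel of g. -/
def gker {n s : ℕ} (φ : Fin n → HS n) (ξ : Fin s → ℂ) (α β : Fin s → Fin n)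
    (a b : Fin n) : ℂ :=
  ∑ i, ξ i * ((Real.sqrt 2 : ℂ) *
    ((2 : ℂ)⁻¹ * (φ (α i) a * φ (β i) b - φ (α i) b * φ (β i) a)))

lemma gker_antisymm {n s : ℕ} (φ : Fin n → HS n) (ξ : Fin s → ℂ) (α β : Fin s → Fin n)
    (a b : Fin n) : gker φ ξ α β b a = - gker φ ξ α β a b := by
  unfold gker
  rw [← Finset.sum_neg_distrib]
  exact Finset.sum_congr rfl (fun i _ => by ring)

section Main

variable {n s : ℕ} (hsn : 2 * s ≤ n) (φ : Fin n → HS n) (hφ : Orthonormal ℂ φ)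
  (ξ : Fin s → ℂ) (l : Fin n) (α β : Fin s → Fin n)
  (hα : ∀ i, (α i : ℕ) = 2 * (i : ℕ)) (hβ : ∀ i, (β i : ℕ) = 2 * (i : ℕ) + 1)

section WithOrth
include hφ

lemma horth : ∀ p q : Fin n, ∑ k, conj (φ p k) * φ q k = if p = q then 1 else 0 := by
  intro p q
  have h := orthonormal_iff_ite.mp hφ p q
  rw [PiLp.inner_apply] at h
  simpa [RCLike.inner_apply, mul_comm] using h

lemma quad : ∀ p q r t : Fin n,
    ∑ a, ∑ b, (conj (φ p a) * conj (φ q b)) * (φ r a * φ t b)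
      = (if p = r then 1 else 0) * (if q = t then 1 else 0) := by
  intro p q r t
  rw [← horth φ hφ p r, ← horth φ hφ q t, Finset.sum_mul_sum]
  exact Finset.sum_congr rfl fun a _ => Finset.sum_congr rfl fun b _ => by ring

include hα hβ

lemma cross : ∀ i j : Fin s,
    ∑ a, ∑ b, conj (φ (α i) a * φ (β i) b - φ (α i) b * φ (β i) a)
        * (φ (α j) a * φ (β j) b - φ (α j) b * φ (β j) a)
      = if i = j then 2 else 0 := by
  intro i j
  have hαα : (α i = α j) ↔ i = j := by
    constructor
    · intro h
      have := congrArg Fin.val h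
      rw [hα i, hα j] at this
      exact Fin.ext (by omega)
    · rintro rfl; rfl
  have hββ : (β i = β j) ↔ i = j := by
    constructor
    · intro h
      have := congrArg Fin.val h
      rw [hβ i, hβ j] at this
      exact Fin.ext (by omega)
    · rintro rfl; rfl
  have hαβ : α i ≠ β j := by
    intro h
    have := congrArg Fin.val h
    rw [hα i, hβ j] at this
    omega
  have hβα : β i ≠ α j := by
    intro h
    have := congrArg Fin.val h
    rw [hβ i, hα j] at this
    omega
  have expand : ∀ a b : Fin n,
      conj (φ (α i) a * φ (β i) b - φ (α i) b * φ (β i) a)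
        * (φ (α j) a * φ (β j) b - φ (α j) b * φ (β j) a)
      = (conj (φ (α i) a) * conj (φ (β i) b)) * (φ (α j) a * φ (β j) b)
        - (conj (φ (α i) a) * conj (φ (β i) b)) * (φ (β j) a * φ (α j) b)
        - (conj (φ (β i) a) * conj (φ (α i) b)) * (φ (α j) a * φ (β j) b)
        + (conj (φ (β i) a) * conj (φ (α i) b)) * (φ (β j) a * φ (α j) b) := by
    intro a b
    simp only [map_sub, map_mul]
    ring
  calc ∑ a, ∑ b, conj (φ (α i) a * φ (β i) b - φ (α i) b * φ (β i) a)
        * (φ (α j) a * φ (β j) b - φ (α j) b * φ (β j) a)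
      = ∑ a, ∑ b, ((conj (φ (α i) a) * conj (φ (β i) b)) * (φ (α j) a * φ (β j) b)
        - (conj (φ (α i) a) * conj (φ (β i) b)) * (φ (β j) a * φ (α j) b)
        - (conj (φ (β i) a) * conj (φ (α i) b)) * (φ (α j) a * φ (β j) b)
        + (conj (φ (β i) a) * conj (φ (α i) b)) * (φ (β j) a * φ (α j) b)) := by
        exact Finset.sum_congr rfl fun a _ => Finset.sum_congr rfl fun b _ => expand a b
    _ = (∑ a, ∑ b, (conj (φ (α i) a) * conj (φ (β i) b)) * (φ (α j) a * φ (β j) b))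
        - (∑ a, ∑ b, (conj (φ (α i) a) * conj (φ (β i) b)) * (φ (β j) a * φ (α j) b))
        - (∑ a, ∑ b, (conj (φ (β i) a) * conj (φ (α i) b)) * (φ (α j) a * φ (β j) b))
        + (∑ a, ∑ b, (conj (φ (β i) a) * conj (φ (α i) b)) * (φ (β j) a * φ (α j) b)) := by
        simp [Finset.sum_sub_distrib, Finset.sum_add_distrib]
    _ = (if α i = α j then 1 else 0) * (if β i = β j then 1 else 0)
        - (if α i = β j then 1 else 0) * (if β i = α j then 1 else 0)
        - (if β i = α j then 1 else 0) * (if α i = β j then 1 else 0)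
        + (if β i = β j then 1 else 0) * (if α i = α j then 1 else 0) := by
        rw [quad φ hφ, quad φ hφ, quad φ hφ, quad φ hφ]
    _ = if i = j then 2 else 0 := by
        by_cases h : i = j
        · subst h
          simp [hαβ, hβα]
          norm_num
        · have h1 : α i ≠ α j := fun hc => h (hαα.mp hc)
          have h2 : β i ≠ β j := fun hc => h (hββ.mp hc)
          simp [h1, h2, hαβ, hβα, h]

lemma gker_norm (hξ : ∑ i, ‖ξ i‖ ^ 2 = 1) :
    ∑ a, ∑ b, conj (gker φ ξ α β a b) * gker φ ξ α β a b = 1 := by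
  have hsq : (Real.sqrt 2 : ℂ) * (Real.sqrt 2 : ℂ) = 2 := by
    rw [← Complex.ofReal_mul, Real.mul_self_sqrt (by norm_num)]
    norm_num
  have h2c : conj (2 : ℂ) = 2 := map_ofNat _ 2
  have step : ∀ a b : Fin n, conj (gker φ ξ α β a b) * gker φ ξ α β a b
      = ∑ i, ∑ j, (conj (ξ i) * ξ j * (2:ℂ)⁻¹) *
          (conj (φ (α i) a * φ (β i) b - φ (α i) b * φ (β i) a)
            * (φ (α j) a * φ (β j) b - φ (α j) b * φ (β j) a)) := by
    intro a b
    unfold gker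
    rw [map_sum, Finset.sum_mul_sum]
    refine Finset.sum_congr rfl fun i _ => Finset.sum_congr rfl fun j _ => ?_
    simp only [map_mul, Complex.conj_ofReal, map_inv₀, h2c]
    set W := conj (φ (α i) a * φ (β i) b - φ (α i) b * φ (β i) a)
    set W' := φ (α j) a * φ (β j) b - φ (α j) b * φ (β j) a
    linear_combination (conj (ξ i) * ξ j * (2:ℂ)⁻¹ * (2:ℂ)⁻¹ * W * W') * hsq
  have hnormξ : ∑ i, conj (ξ i) * ξ i = 1 := by
    have h1 : ∀ z : ℂ, conj z * z = ((‖z‖ ^ 2 : ℝ) : ℂ) := by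
      intro z
      rw [mul_comm, Complex.mul_conj, Complex.normSq_eq_norm_sq]
    calc ∑ i, conj (ξ i) * ξ i = ∑ i, ((‖ξ i‖ ^ 2 : ℝ) : ℂ) :=
          Finset.sum_congr rfl fun i _ => h1 (ξ i)
      _ = ((∑ i, ‖ξ i‖ ^ 2 : ℝ) : ℂ) := by rw [Complex.ofReal_sum]
      _ = 1 := by rw [hξ, Complex.ofReal_one]
  calc ∑ a, ∑ b, conj (gker φ ξ α β a b) * gker φ ξ α β a b
      = ∑ a, ∑ b, ∑ i, ∑ j, (conj (ξ i) * ξ j * (2:ℂ)⁻¹) *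
          (conj (φ (α i) a * φ (β i) b - φ (α i) b * φ (β i) a)
            * (φ (α j) a * φ (β j) b - φ (α j) b * φ (β j) a)) :=
        Finset.sum_congr rfl fun a _ => Finset.sum_congr rfl fun b _ => step a b
    _ = ∑ i, ∑ j, ∑ a, ∑ b, (conj (ξ i) * ξ j * (2:ℂ)⁻¹) *
          (conj (φ (α i) a * φ (β i) b - φ (α i) b * φ (β i) a)
            * (φ (α j) a * φ (β j) b - φ (α j) b * φ (β j) a)) := swap4 _
    _ = ∑ i, ∑ j, (conj (ξ i) * ξ j * (2:ℂ)⁻¹) *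
          (∑ a, ∑ b, conj (φ (α i) a * φ (β i) b - φ (α i) b * φ (β i) a)
            * (φ (α j) a * φ (β j) b - φ (α j) b * φ (β j) a)) := by
        simp only [← Finset.mul_sum]
    _ = ∑ i, ∑ j, (conj (ξ i) * ξ j * (2:ℂ)⁻¹) * (if i = j then 2 else 0) := by
        refine Finset.sum_congr rfl fun i _ => Finset.sum_congr rfl fun j _ => ?_
        rw [cross φ hφ α β hα hβ i j]
    _ = ∑ i, conj (ξ i) * ξ i := by
        refine Finset.sum_congr rfl fun i _ => ?_
        rw [Finset.sum_eq_single i]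
        · simp
        · intro j _ hj
          simp [Ne.symm hj]
        · intro h
          exact absurd (Finset.mem_univ i) h
    _ = 1 := hnormξ

lemma gker_ortho_left (hl : 2 * s ≤ (l : ℕ)) : ∀ b, ∑ a, conj (gker φ ξ α β a b) * φ l a = 0 := by
  have hαl : ∀ i, α i ≠ l := by
    intro i h
    have h2 := congrArg Fin.val h
    rw [hα i] at h2
    have := i.isLt
    omega
  have hβl : ∀ i, β i ≠ l := by
    intro i h
    have h2 := congrArg Fin.val h
    rw [hβ i] at h2
    have := i.isLt
    omega
  have single : ∀ p : Fin n, p ≠ l → ∑ a, conj (φ p a) * φ l a = 0 := by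
    intro p hp
    rw [horth φ hφ]
    simp [hp]
  have h2c : conj (2 : ℂ) = 2 := map_ofNat _ 2
  intro b
  have step : ∀ a, conj (gker φ ξ α β a b) * φ l a
      = ∑ i, ((conj (ξ i) * (Real.sqrt 2 : ℂ) * (2:ℂ)⁻¹ * conj (φ (β i) b))
              * (conj (φ (α i) a) * φ l a)
            - (conj (ξ i) * (Real.sqrt 2 : ℂ) * (2:ℂ)⁻¹ * conj (φ (α i) b))
              * (conj (φ (β i) a) * φ l a)) := by
    intro a
    unfold gker
    rw [map_sum, Finset.sum_mul]
    refine Finset.sum_congr rfl fun i _ => ?_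
    simp only [map_mul, map_sub, Complex.conj_ofReal, map_inv₀, h2c]
    ring
  rw [Finset.sum_congr rfl (fun a _ => step a), Finset.sum_comm]
  apply Finset.sum_eq_zero
  intro i _
  rw [Finset.sum_sub_distrib, ← Finset.mul_sum, ← Finset.mul_sum,
    single _ (hαl i), single _ (hβl i)]
  ring

lemma gker_ortho_right (hl : 2 * s ≤ (l : ℕ)) : ∀ a, ∑ b, conj (gker φ ξ α β a b) * φ l b = 0 := by
  have hαl : ∀ i, α i ≠ l := by
    intro i h
    have h2 := congrArg Fin.val h
    rw [hα i] at h2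
    have := i.isLt
    omega
  have hβl : ∀ i, β i ≠ l := by
    intro i h
    have h2 := congrArg Fin.val h
    rw [hβ i] at h2
    have := i.isLt
    omega
  have single : ∀ p : Fin n, p ≠ l → ∑ b, conj (φ p b) * φ l b = 0 := by
    intro p hp
    rw [horth φ hφ]
    simp [hp]
  have h2c : conj (2 : ℂ) = 2 := map_ofNat _ 2
  intro a
  have step : ∀ b, conj (gker φ ξ α β a b) * φ l b
      = ∑ i, ((conj (ξ i) * (Real.sqrt 2 : ℂ) * (2:ℂ)⁻¹ * conj (φ (α i) a))
              * (conj (φ (β i) b) * φ l b)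
            - (conj (ξ i) * (Real.sqrt 2 : ℂ) * (2:ℂ)⁻¹ * conj (φ (β i) a))
              * (conj (φ (α i) b) * φ l b)) := by
    intro b
    unfold gker
    rw [map_sum, Finset.sum_mul]
    refine Finset.sum_congr rfl fun i _ => ?_
    simp only [map_mul, map_sub, Complex.conj_ofReal, map_inv₀, h2c]
    ring
  rw [Finset.sum_congr rfl (fun b _ => step b), Finset.sum_comm]
  apply Finset.sum_eq_zero
  intro i _
  rw [Finset.sum_sub_distrib, ← Finset.mul_sum, ← Finset.mul_sum,
    single _ (hβl i), single _ (hαl i)]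
  ring

end WithOrth

end Main

lemma expand3 {ι : Type*} [Fintype ι] (X Y Z : ι → ι → ℂ) (c : ℂ) :
    ∑ a, ∑ b, (6:ℂ)⁻¹ * (2 * X a b * c - 2 * Y a b + 2 * Z a b)
      = (6:ℂ)⁻¹ * (2 * (∑ a, ∑ b, X a b) * c - 2 * (∑ a, ∑ b, Y a b)
          + 2 * (∑ a, ∑ b, Z a b)) := by
  have l1 : ∑ a, ∑ b, (6:ℂ)⁻¹ * (2 * X a b * c - 2 * Y a b + 2 * Z a b)
      = ∑ a, ∑ b, (((3:ℂ)⁻¹ * c) * X a b - (3:ℂ)⁻¹ * Y a b + (3:ℂ)⁻¹ * Z a b) :=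
    Finset.sum_congr rfl fun a _ => Finset.sum_congr rfl fun b _ => by ring
  rw [l1]
  simp only [Finset.sum_add_distrib, Finset.sum_sub_distrib, ← Finset.mul_sum]
  ring


theorem mainLemma (n s : ℕ) (hsn : 2 * s ≤ n) (φ : Fin n → HS n)
    (hφ : Orthonormal ℂ φ) (ξ : Fin s → ℂ) (hξ : ∑ i, ‖ξ i‖ ^ 2 = 1)
    (l : Fin n) (hl : 2 * s ≤ (l : ℕ)) (α β : Fin s → Fin n)
    (hα : ∀ i, (α i : ℕ) = 2 * (i : ℕ)) (hβ : ∀ i, (β i : ℕ) = 2 * (i : ℕ) + 1) :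
    T3 n (∑ i, ξ i • ((Real.sqrt 2 : ℂ) • wedge2 n (φ (α i)) (φ (β i))))
      (wedgeSV n (∑ i, ξ i • ((Real.sqrt 2 : ℂ) • wedge2 n (φ (α i)) (φ (β i)))) (φ l))
    = wedgeSV n (∑ i, ξ i • ((Real.sqrt 2 : ℂ) • wedge2 n (φ (α i)) (φ (β i)))) (φ l) := by
  set G : Sq n := ∑ i, ξ i • ((Real.sqrt 2 : ℂ) • wedge2 n (φ (α i)) (φ (β i))) with hG
  have hgy : ∀ y : Fin 2 → Fin n, G y = gker φ ξ α β (y 0) (y 1) := by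
    intro y
    rw [hG, WithLp.ofLp_sum, Finset.sum_apply]
    exact Finset.sum_congr rfl fun i _ => rfl
  have hFv2 : ∀ p q r : Fin n,
      (fun x : Fin 3 → Fin n => G ![x 0, x 1] * φ l (x 2)) ![p, q, r]
        = gker φ ξ α β p q * φ l r := by
    intro p q r
    show G ![p, q] * φ l r = _
    rw [hgy]
    rfl
  -- composition facts
  have hsummand : ∀ a b z : Fin n,
      conj (gker φ ξ α β a b) * wedgeSV n G (φ l) ![a, b, z]
        = (6:ℂ)⁻¹ * (2 * (conj (gker φ ξ α β a b) * gker φ ξ α β a b) * φ l z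
            - 2 * (gker φ ξ α β z b * (conj (gker φ ξ α β a b) * φ l a))
            + 2 * (gker φ ξ α β z a * (conj (gker φ ξ α β a b) * φ l b))) := by
    intro a b z
    have cid : (![a,b,z] ∘ ⇑(1 : Equiv.Perm (Fin 3))) = ![a,b,z] := by
      funext k; fin_cases k <;> rfl
    have c01 : (![a,b,z] ∘ ⇑(Equiv.swap (0:Fin 3) 1)) = ![b,a,z] := by
      funext k; fin_cases k <;> rfl
    have c02 : (![a,b,z] ∘ ⇑(Equiv.swap (0:Fin 3) 2)) = ![z,b,a] := by
      funext k; fin_cases k <;> rfl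
    have c12 : (![a,b,z] ∘ ⇑(Equiv.swap (1:Fin 3) 2)) = ![a,z,b] := by
      funext k; fin_cases k <;> rfl
    have c012 : (![a,b,z] ∘ ⇑(Equiv.swap (0:Fin 3) 1 * Equiv.swap (1:Fin 3) 2)) = ![b,z,a] := by
      funext k; fin_cases k <;> rfl
    have c021 : (![a,b,z] ∘ ⇑(Equiv.swap (0:Fin 3) 2 * Equiv.swap (1:Fin 3) 2)) = ![z,a,b] := by
      funext k; fin_cases k <;> rfl
    have sgnid : ((Equiv.Perm.sign (1 : Equiv.Perm (Fin 3)) : ℤ) : ℂ) = 1 := by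
      rw [show (Equiv.Perm.sign (1 : Equiv.Perm (Fin 3)) : ℤ) = 1 by decide]; norm_num
    have sgn01 : ((Equiv.Perm.sign (Equiv.swap (0:Fin 3) 1) : ℤ) : ℂ) = -1 := by
      rw [show (Equiv.Perm.sign (Equiv.swap (0:Fin 3) 1) : ℤ) = -1 by decide]; norm_num
    have sgn02 : ((Equiv.Perm.sign (Equiv.swap (0:Fin 3) 2) : ℤ) : ℂ) = -1 := by
      rw [show (Equiv.Perm.sign (Equiv.swap (0:Fin 3) 2) : ℤ) = -1 by decide]; norm_num
    have sgn12 : ((Equiv.Perm.sign (Equiv.swap (1:Fin 3) 2) : ℤ) : ℂ) = -1 := by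
      rw [show (Equiv.Perm.sign (Equiv.swap (1:Fin 3) 2) : ℤ) = -1 by decide]; norm_num
    have sgn012 : ((Equiv.Perm.sign (Equiv.swap (0:Fin 3) 1 * Equiv.swap (1:Fin 3) 2) : ℤ) : ℂ) = 1 := by
      rw [show (Equiv.Perm.sign (Equiv.swap (0:Fin 3) 1 * Equiv.swap (1:Fin 3) 2) : ℤ) = 1 by decide]; norm_num
    have sgn021 : ((Equiv.Perm.sign (Equiv.swap (0:Fin 3) 2 * Equiv.swap (1:Fin 3) 2) : ℤ) : ℂ) = 1 := by
      rw [show (Equiv.Perm.sign (Equiv.swap (0:Fin 3) 2 * Equiv.swap (1:Fin 3) 2) : ℤ) = 1 by decide]; norm_num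
    have expand : wedgeSV n G (φ l) ![a, b, z]
        = (6:ℂ)⁻¹ * ∑ σ : Equiv.Perm (Fin 3), ((Equiv.Perm.sign σ : ℤ) : ℂ)
            * (fun x : Fin 3 → Fin n => G ![x 0, x 1] * φ l (x 2)) (![a,b,z] ∘ σ) :=
      alt3_apply n (WithLp.toLp 2 (fun x : Fin 3 → Fin n => G ![x 0, x 1] * φ l (x 2))) ![a,b,z]
    rw [expand, permSum3, cid, c01, c02, c12, c012, c021,
      sgnid, sgn01, sgn02, sgn12, sgn012, sgn021,
      hFv2, hFv2, hFv2, hFv2, hFv2, hFv2,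
      gker_antisymm φ ξ α β a b,  -- rewrites gker b a? no: lemma is gker b a = - gker a b with (a b) args: gker_antisymm φ ξ α β a b : gker φ ξ α β b a = - gker φ ξ α β a b
      gker_antisymm φ ξ α β z a,  -- gker a z = - gker z a
      gker_antisymm φ ξ α β z b]  -- gker b z = - gker z b
    ring
  have hD : ∀ z : Fin n,
      ∑ y : Fin 2 → Fin n, conj (G y) * wedgeSV n G (φ l) ![y 0, y 1, z]
        = (3:ℂ)⁻¹ * φ l z := by
    intro z
    have S1 := gker_norm φ hφ ξ α β hα hβ hξ
    have S2 : ∑ a, ∑ b, gker φ ξ α β z b * (conj (gker φ ξ α β a b) * φ l a) = 0 := by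
      rw [Finset.sum_comm]
      apply Finset.sum_eq_zero
      intro b _
      rw [← Finset.mul_sum, gker_ortho_left φ hφ ξ l α β hα hβ hl b, mul_zero]
    have S3 : ∑ a, ∑ b, gker φ ξ α β z a * (conj (gker φ ξ α β a b) * φ l b) = 0 := by
      apply Finset.sum_eq_zero
      intro a _
      rw [← Finset.mul_sum, gker_ortho_right φ hφ ξ l α β hα hβ hl a, mul_zero]
    calc ∑ y : Fin 2 → Fin n, conj (G y) * wedgeSV n G (φ l) ![y 0, y 1, z]
        = ∑ a, ∑ b, conj (gker φ ξ α β a b) * wedgeSV n G (φ l) ![a, b, z] := by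
          rw [← sum_fin2 n (fun a b => conj (gker φ ξ α β a b) * wedgeSV n G (φ l) ![a, b, z])]
          exact Finset.sum_congr rfl fun y _ => by rw [hgy]
      _ = ∑ a, ∑ b, (6:ℂ)⁻¹ * (2 * (conj (gker φ ξ α β a b) * gker φ ξ α β a b) * φ l z
            - 2 * (gker φ ξ α β z b * (conj (gker φ ξ α β a b) * φ l a))
            + 2 * (gker φ ξ α β z a * (conj (gker φ ξ α β a b) * φ l b))) :=
          Finset.sum_congr rfl fun a _ => Finset.sum_congr rfl fun b _ => hsummand a b z
      _ = (6:ℂ)⁻¹ * (2 * (∑ a, ∑ b, conj (gker φ ξ α β a b) * gker φ ξ α β a b) * φ l z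
            - 2 * (∑ a, ∑ b, gker φ ξ α β z b * (conj (gker φ ξ α β a b) * φ l a))
            + 2 * (∑ a, ∑ b, gker φ ξ α β z a * (conj (gker φ ξ α β a b) * φ l b))) :=
          expand3 _ _ _ _
      _ = (3:ℂ)⁻¹ * φ l z := by rw [S1, S2, S3]; ring
  have hC : pgI n G (wedgeSV n G (φ l))
      = (3:ℂ)⁻¹ • (WithLp.toLp 2 (fun x : Fin 3 → Fin n => G ![x 0, x 1] * φ l (x 2)) : Cube n) := by
    ext x
    rw [pgI_apply, hD (x 2)]
    show G ![x 0, x 1] * ((3:ℂ)⁻¹ * φ l (x 2)) = (3:ℂ)⁻¹ * (G ![x 0, x 1] * φ l (x 2))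
    ring
  have idem : alt3 n (wedgeSV n G (φ l)) = wedgeSV n G (φ l) :=
    alt3_idem n (WithLp.toLp 2 (fun x : Fin 3 → Fin n => G ![x 0, x 1] * φ l (x 2)))
  have hT3 : T3 n G (wedgeSV n G (φ l))
      = (3:ℂ) • alt3 n (pgI n G (alt3 n (wedgeSV n G (φ l)))) := rfl
  rw [hT3, idem, hC, map_smul, smul_smul]
  norm_num
  rfl

/-- For 2s < l ≤ n, g ∧ φ_l is an eigenvector of T with eigenvalue 1. -/
theorem stmt13 (n s : ℕ) (hsn : 2 * s ≤ n) (φ : Fin n → HS n)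
    (hφ : Orthonormal ℂ φ) (ξ : Fin s → ℂ) (hξ : ∑ i, ‖ξ i‖ ^ 2 = 1)
    (l : Fin n) (hl : 2 * s ≤ (l : ℕ)) :
    let g : Sq n := ∑ i : Fin s, ξ i • ((Real.sqrt 2 : ℂ) •
      wedge2 n (φ ⟨2 * (i : ℕ), by have := i.isLt; omega⟩)
        (φ ⟨2 * (i : ℕ) + 1, by have := i.isLt; omega⟩));
    T3 n g (wedgeSV n g (φ l)) = wedgeSV n g (φ l) := by
  intro g
  exact mainLemma n s hsn φ hφ ξ hξ l hl
    (fun i => ⟨2 * (i : ℕ), by have := i.isLt; omega⟩)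
    (fun i => ⟨2 * (i : ℕ) + 1, by have := i.isLt; omega⟩)
    (fun i => rfl) (fun i => rfl)

end
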